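/- For a standard Gaussian vector γ in R^p, any unit vector a in R^p, u ∈ R^p, and z > 0: E[|γᵀa|² exp(‖γ - u‖²/4)] ≤ (2 + |uᵀa|²) exp(p/2 + ‖u‖²/2). -/

import Mathlib

open MeasureTheory ProbabilityTheory Real

section Aux

open scoped ENNReal NNReal

/-! ### One-dimensional Lebesgue integrals -/

lemma auxA0 : ∫ x : ℝ, Real.exp (-4⁻¹ * x ^ 2) = 2 * √π := by
  rw [integral_gaussian]
  rw [show (π / (4⁻¹ : ℝ)) = 2 ^ 2 * π by ring, Real.sqrt_mul (by positivity),
    Real.sqrt_sq (by norm_num)]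

lemma auxA1 : ∫ x : ℝ, x * Real.exp (-4⁻¹ * x ^ 2) = 0 := by
  have h := integral_neg_eq_self (fun x : ℝ => x * Real.exp (-4⁻¹ * x ^ 2)) volume
  have h2 : ∫ x : ℝ, -(x * Real.exp (-4⁻¹ * x ^ 2)) = ∫ x : ℝ, x * Real.exp (-4⁻¹ * x ^ 2) := by
    rw [← h]
    congr 1
    funext x
    rw [neg_sq]
    ring
  rw [integral_neg] at h2
  linarith

lemma auxA2 : ∫ x : ℝ, x ^ 2 * Real.exp (-4⁻¹ * x ^ 2) = 4 * √π := by
  have habs : ∫ x : ℝ, x ^ 2 * Real.exp (-4⁻¹ * x ^ 2)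
      = 2 * ∫ x in Set.Ioi (0 : ℝ), x ^ 2 * Real.exp (-4⁻¹ * x ^ 2) := by
    have h0 : ∫ x : ℝ, x ^ 2 * Real.exp (-4⁻¹ * x ^ 2)
        = ∫ x : ℝ, |x| ^ 2 * Real.exp (-4⁻¹ * |x| ^ 2) := by
      congr 1
      funext x
      rw [sq_abs]
    rw [h0]
    exact integral_comp_abs (f := fun y : ℝ => y ^ 2 * Real.exp (-4⁻¹ * y ^ 2))
  rw [habs]
  have h := integral_rpow_mul_exp_neg_mul_rpow (p := 2) (q := 2) (b := 4⁻¹)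
    (by norm_num) (by norm_num) (by norm_num)
  have hpow : ∀ x : ℝ, x ^ (2 : ℝ) = x ^ (2 : ℕ) := fun x => by
    rw [← Real.rpow_natCast x 2]; norm_num
  simp_rw [hpow] at h
  rw [h]
  have h8 : ((4 : ℝ)⁻¹) ^ (-(2 + 1) / 2 : ℝ) = 8 := by
    rw [show ((4 : ℝ)⁻¹) = (2 : ℝ) ^ (-2 : ℤ) by norm_num, ← Real.rpow_intCast,
      ← Real.rpow_mul (by norm_num)]
    rw [show ((-2 : ℤ) : ℝ) * (-(2 + 1) / 2) = ((3 : ℕ) : ℝ) by norm_num,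
      Real.rpow_natCast]
    norm_num
  have hG : Real.Gamma ((2 + 1) / 2 : ℝ) = (1 / 2) * √π := by
    rw [show ((2 + 1) / 2 : ℝ) = 1 / 2 + 1 by norm_num,
      Real.Gamma_add_one (by norm_num), Real.Gamma_one_half_eq]
  rw [h8, hG]; ring

/-! ### Integrability on the line -/

lemma auxIA0 : Integrable (fun x : ℝ => Real.exp (-4⁻¹ * x ^ 2)) :=
  integrable_exp_neg_mul_sq (by norm_num)

lemma auxIA1 : Integrable (fun x : ℝ => x * Real.exp (-4⁻¹ * x ^ 2)) :=
  integrable_mul_exp_neg_mul_sq (by norm_num)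

lemma auxIA2 : Integrable (fun x : ℝ => x ^ 2 * Real.exp (-4⁻¹ * x ^ 2)) := by
  have h := integrable_rpow_mul_exp_neg_mul_sq (b := (4:ℝ)⁻¹) (by norm_num) (s := 2)
    (by norm_num)
  have hpow : ∀ x : ℝ, x ^ (2 : ℝ) = x ^ (2 : ℕ) := fun x => by
    rw [← Real.rpow_natCast x 2]; norm_num
  simpa [hpow] using h

/-! ### Shifted versions -/

variable (c : ℝ)

lemma auxShift (g : ℝ → ℝ) :
    ∫ x : ℝ, g (x + c) = ∫ x : ℝ, g x :=
  integral_add_right_eq_self g c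

lemma auxJ0 : ∫ x : ℝ, Real.exp (-4⁻¹ * (x + c) ^ 2) = 2 * √π := by
  rw [auxShift c (fun y : ℝ => Real.exp (-4⁻¹ * y ^ 2)), auxA0]

lemma auxIJ0 : Integrable (fun x : ℝ => Real.exp (-4⁻¹ * (x + c) ^ 2)) :=
  auxIA0.comp_add_right c

lemma auxIJpoly : Integrable (fun x : ℝ => ((x + c) - c) ^ 2 * Real.exp (-4⁻¹ * (x + c) ^ 2)) := by
  have : Integrable (fun y : ℝ => (y - c) ^ 2 * Real.exp (-4⁻¹ * y ^ 2)) := by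
    have : (fun y : ℝ => (y - c) ^ 2 * Real.exp (-4⁻¹ * y ^ 2))
        = fun y : ℝ => (y ^ 2 * Real.exp (-4⁻¹ * y ^ 2)
            - (2 * c) * (y * Real.exp (-4⁻¹ * y ^ 2)))
          + c ^ 2 * Real.exp (-4⁻¹ * y ^ 2) := by
      funext y; ring
    rw [this]
    exact ((auxIA2.sub (auxIA1.const_mul _)).add (auxIA0.const_mul _))
  exact this.comp_add_right c

lemma auxIJ1 : Integrable (fun x : ℝ => x * Real.exp (-4⁻¹ * (x + c) ^ 2)) := by
  have : Integrable (fun y : ℝ => (y - c) * Real.exp (-4⁻¹ * y ^ 2)) := by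
    have : (fun y : ℝ => (y - c) * Real.exp (-4⁻¹ * y ^ 2))
        = fun y : ℝ => y * Real.exp (-4⁻¹ * y ^ 2) - c * Real.exp (-4⁻¹ * y ^ 2) := by
      funext y; ring
    rw [this]
    exact auxIA1.sub (auxIA0.const_mul _)
  have h := this.comp_add_right c
  simpa using h

lemma auxIJ2 : Integrable (fun x : ℝ => x ^ 2 * Real.exp (-4⁻¹ * (x + c) ^ 2)) := by
  have h := auxIJpoly c
  simpa using h

lemma auxJ1 : ∫ x : ℝ, x * Real.exp (-4⁻¹ * (x + c) ^ 2) = -c * (2 * √π) := by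
  have h := auxShift c (fun y : ℝ => (y - c) * Real.exp (-4⁻¹ * y ^ 2))
  simp only [add_sub_cancel_right] at h
  rw [h]
  have hsplit : (fun y : ℝ => (y - c) * Real.exp (-4⁻¹ * y ^ 2))
      = fun y : ℝ => y * Real.exp (-4⁻¹ * y ^ 2) - c * Real.exp (-4⁻¹ * y ^ 2) := by
    funext y; ring
  have i1 : Integrable (fun y : ℝ => c * Real.exp (-4⁻¹ * y ^ 2)) volume :=
    auxIA0.const_mul _
  rw [hsplit, integral_sub auxIA1 i1, auxA1, integral_const_mul, auxA0]
  ring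

lemma auxJ2 : ∫ x : ℝ, x ^ 2 * Real.exp (-4⁻¹ * (x + c) ^ 2) = (2 + c ^ 2) * (2 * √π) := by
  have h := auxShift c (fun y : ℝ => (y - c) ^ 2 * Real.exp (-4⁻¹ * y ^ 2))
  simp only [add_sub_cancel_right] at h
  rw [h]
  have hsplit : (fun y : ℝ => (y - c) ^ 2 * Real.exp (-4⁻¹ * y ^ 2))
      = fun y : ℝ => (y ^ 2 * Real.exp (-4⁻¹ * y ^ 2)
          - (2 * c) * (y * Real.exp (-4⁻¹ * y ^ 2)))
        + c ^ 2 * Real.exp (-4⁻¹ * y ^ 2) := by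
    funext y; ring
  have i1 : Integrable (fun y : ℝ => y ^ 2 * Real.exp (-4⁻¹ * y ^ 2)
      - (2 * c) * (y * Real.exp (-4⁻¹ * y ^ 2))) volume :=
    auxIA2.sub (auxIA1.const_mul (2 * c))
  have i2 : Integrable (fun y : ℝ => c ^ 2 * Real.exp (-4⁻¹ * y ^ 2)) volume :=
    auxIA0.const_mul _
  have i3 : Integrable (fun y : ℝ => (2 * c) * (y * Real.exp (-4⁻¹ * y ^ 2))) volume :=
    auxIA1.const_mul _
  rw [hsplit, integral_add i1 i2, integral_sub auxIA2 i3, integral_const_mul, integral_const_mul,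
    auxA0, auxA1, auxA2]
  ring

/-! ### Transfer to the Gaussian measure -/

lemma gauss_integral_eq (g : ℝ → ℝ) :
    ∫ x, g x ∂(gaussianReal 0 1) = ∫ x, gaussianPDFReal 0 1 x * g x := by
  rw [gaussianReal_of_var_ne_zero _ one_ne_zero]
  have hd : gaussianPDF 0 1 = fun x => ((Real.toNNReal (gaussianPDFReal 0 1 x) : ℝ≥0) : ℝ≥0∞) := by
    funext x; rfl
  rw [hd, integral_withDensity_eq_integral_smul
    ((measurable_gaussianPDFReal 0 1).real_toNNReal) g]
  congr 1 with x
  simp [NNReal.smul_def, Real.coe_toNNReal _ (gaussianPDFReal_nonneg 0 1 x)]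

lemma gauss_integrable_iff (g : ℝ → ℝ) :
    Integrable g (gaussianReal 0 1) ↔
      Integrable (fun x => gaussianPDFReal 0 1 x * g x) volume := by
  rw [gaussianReal_of_var_ne_zero _ one_ne_zero]
  have hd : gaussianPDF 0 1 = fun x => ((Real.toNNReal (gaussianPDFReal 0 1 x) : ℝ≥0) : ℝ≥0∞) := by
    funext x; rfl
  rw [hd, integrable_withDensity_iff_integrable_smul
    ((measurable_gaussianPDFReal 0 1).real_toNNReal)]
  constructor <;> intro h <;> [skip; skip] <;>
  · refine h.congr ?_
    filter_upwards with x
    simp [NNReal.smul_def, Real.coe_toNNReal _ (gaussianPDFReal_nonneg 0 1 x)]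

lemma gauss_pdf_mul (k : ℕ) (x : ℝ) :
    gaussianPDFReal 0 1 x * (x ^ k * Real.exp ((x - c) ^ 2 / 4))
      = (√(2 * π))⁻¹ * Real.exp (c ^ 2 / 2) * (x ^ k * Real.exp (-4⁻¹ * (x + c) ^ 2)) := by
  rw [gaussianPDFReal_def]
  simp only [NNReal.coe_one, mul_one, sub_zero]
  have h2 : Real.exp (-x ^ 2 / 2) * Real.exp ((x - c) ^ 2 / 4)
      = Real.exp (c ^ 2 / 2) * Real.exp (-4⁻¹ * (x + c) ^ 2) := by
    rw [← Real.exp_add, ← Real.exp_add]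
    congr 1
    ring
  linear_combination ((√(2 * π))⁻¹ * x ^ k) * h2

lemma const_eval : (√(2 * π))⁻¹ * (2 * √π) = √2 := by
  rw [Real.sqrt_mul (by norm_num) π, mul_inv]
  have h2 : (√2 : ℝ) * √2 = 2 := Real.mul_self_sqrt (by norm_num)
  have hπ : (0 : ℝ) < √π := Real.sqrt_pos.mpr Real.pi_pos
  have h2' : (0 : ℝ) < √2 := Real.sqrt_pos.mpr (by norm_num)
  field_simp
  rw [sq, h2]

lemma gval_e : ∫ x, Real.exp ((x - c) ^ 2 / 4) ∂(gaussianReal 0 1)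
    = √2 * Real.exp (c ^ 2 / 2) := by
  rw [gauss_integral_eq]
  have : (fun x => gaussianPDFReal 0 1 x * Real.exp ((x - c) ^ 2 / 4))
      = fun x => (√(2 * π))⁻¹ * Real.exp (c ^ 2 / 2)
          * (Real.exp (-4⁻¹ * (x + c) ^ 2)) := by
    funext x
    have := gauss_pdf_mul c 0 x
    simpa using this
  rw [this, integral_const_mul, auxJ0]
  rw [show (√(2 * π))⁻¹ * Real.exp (c ^ 2 / 2) * (2 * √π)
      = Real.exp (c ^ 2 / 2) * ((√(2 * π))⁻¹ * (2 * √π)) by ring, const_eval]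
  ring

lemma gval_xe : ∫ x, x * Real.exp ((x - c) ^ 2 / 4) ∂(gaussianReal 0 1)
    = √2 * Real.exp (c ^ 2 / 2) * (-c) := by
  rw [gauss_integral_eq]
  have : (fun x => gaussianPDFReal 0 1 x * (x * Real.exp ((x - c) ^ 2 / 4)))
      = fun x => (√(2 * π))⁻¹ * Real.exp (c ^ 2 / 2)
          * (x * Real.exp (-4⁻¹ * (x + c) ^ 2)) := by
    funext x
    have := gauss_pdf_mul c 1 x
    simpa using this
  rw [this, integral_const_mul, auxJ1]
  rw [show (√(2 * π))⁻¹ * Real.exp (c ^ 2 / 2) * (-c * (2 * √π))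
      = (Real.exp (c ^ 2 / 2) * (-c)) * ((√(2 * π))⁻¹ * (2 * √π)) by ring, const_eval]
  ring

lemma gval_x2e : ∫ x, x ^ 2 * Real.exp ((x - c) ^ 2 / 4) ∂(gaussianReal 0 1)
    = √2 * Real.exp (c ^ 2 / 2) * (2 + c ^ 2) := by
  rw [gauss_integral_eq]
  have : (fun x => gaussianPDFReal 0 1 x * (x ^ 2 * Real.exp ((x - c) ^ 2 / 4)))
      = fun x => (√(2 * π))⁻¹ * Real.exp (c ^ 2 / 2)
          * (x ^ 2 * Real.exp (-4⁻¹ * (x + c) ^ 2)) := by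
    funext x
    have := gauss_pdf_mul c 2 x
    simpa using this
  rw [this, integral_const_mul, auxJ2]
  rw [show (√(2 * π))⁻¹ * Real.exp (c ^ 2 / 2) * ((2 + c ^ 2) * (2 * √π))
      = (Real.exp (c ^ 2 / 2) * (2 + c ^ 2)) * ((√(2 * π))⁻¹ * (2 * √π)) by ring, const_eval]
  ring

lemma gint_gen (k : ℕ) (hI : Integrable (fun x : ℝ => x ^ k * Real.exp (-4⁻¹ * (x + c) ^ 2))) :
    Integrable (fun x : ℝ => x ^ k * Real.exp ((x - c) ^ 2 / 4)) (gaussianReal 0 1) := by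
  rw [gauss_integrable_iff]
  have : (fun x => gaussianPDFReal 0 1 x * (x ^ k * Real.exp ((x - c) ^ 2 / 4)))
      = fun x => (√(2 * π))⁻¹ * Real.exp (c ^ 2 / 2)
          * (x ^ k * Real.exp (-4⁻¹ * (x + c) ^ 2)) := by
    funext x; exact gauss_pdf_mul c k x
  rw [this]
  exact hI.const_mul _

lemma gint_e : Integrable (fun x : ℝ => Real.exp ((x - c) ^ 2 / 4)) (gaussianReal 0 1) := by
  have := gint_gen c 0 (by simpa using auxIJ0 c)
  simpa using this

lemma gint_xe : Integrable (fun x : ℝ => x * Real.exp ((x - c) ^ 2 / 4)) (gaussianReal 0 1) := by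
  have := gint_gen c 1 (by simpa using auxIJ1 c)
  simpa using this

lemma gint_x2e : Integrable (fun x : ℝ => x ^ 2 * Real.exp ((x - c) ^ 2 / 4)) (gaussianReal 0 1) :=
  gint_gen c 2 (auxIJ2 c)

/-! ### Product (Fubini) lemmas for a general probability measure -/

lemma my_integrable_pi {n : ℕ} (μ : Measure ℝ) [IsProbabilityMeasure μ]
    {f : Fin n → ℝ → ℝ} (hf : ∀ i, Integrable (f i) μ) :
    Integrable (fun x : Fin n → ℝ => ∏ i, f i (x i)) (Measure.pi fun _ => μ) := by
  induction n with
  | zero =>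
      simp only [Finset.univ_eq_empty, Finset.prod_empty]
      exact integrable_const 1
  | succ n ih =>
      have hmp := (measurePreserving_piFinSuccAbove (fun _ : Fin (n + 1) => μ) 0).symm
      rw [← hmp.integrable_comp_emb (MeasurableEquiv.measurableEmbedding _)]
      have h2 : Integrable (fun z : ℝ × (Fin n → ℝ) => f 0 z.1 * ∏ i : Fin n, f i.succ (z.2 i))
          (μ.prod (Measure.pi fun _ => μ)) :=
        Integrable.mul_prod (hf 0) (ih fun i => hf i.succ)
      refine h2.congr ?_
      filter_upwards with z
      simp only [Function.comp_apply, MeasurableEquiv.piFinSuccAbove_symm_apply,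
        Fin.insertNthEquiv, Equiv.coe_fn_mk, Fin.insertNth_zero]
      rw [Fin.prod_univ_succ]
      simp [Fin.cons_zero, Fin.cons_succ]

lemma my_integral_pi {n : ℕ} (μ : Measure ℝ) [IsProbabilityMeasure μ]
    (f : Fin n → ℝ → ℝ) :
    ∫ x : Fin n → ℝ, ∏ i, f i (x i) ∂(Measure.pi fun _ => μ) = ∏ i, ∫ x, f i x ∂μ := by
  induction n with
  | zero => simp
  | succ n ih =>
      have hmp := (measurePreserving_piFinSuccAbove (fun _ : Fin (n + 1) => μ) 0).symm
      rw [← hmp.integral_comp']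
      have hfun : ∀ z : ℝ × (Fin n → ℝ),
          (∏ i, f i ((MeasurableEquiv.piFinSuccAbove (fun _ => ℝ) 0).symm z i))
            = f 0 z.1 * ∏ i : Fin n, f i.succ (z.2 i) := by
        intro z
        simp only [MeasurableEquiv.piFinSuccAbove_symm_apply, Fin.insertNthEquiv,
          Equiv.coe_fn_mk, Fin.insertNth_zero]
        rw [Fin.prod_univ_succ]
        simp [Fin.cons_zero, Fin.cons_succ]
      rw [integral_congr_ae (Filter.Eventually.of_forall hfun)]
      rw [integral_prod_mul (f 0) (fun y : Fin n → ℝ => ∏ i : Fin n, f i.succ (y i)), ih]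
      rw [Fin.prod_univ_succ]

end Aux

/-- For a standard Gaussian vector `γ` in `ℝ^p`, a unit vector `a`, `u ∈ ℝ^p` and `z > 0`:
`E[|γᵀa|² exp(‖γ - u‖²/4)] ≤ (2 + |uᵀa|²) exp(p/2 + ‖u‖²/2)`. -/
theorem gauss_quad_exp_bound (p : ℕ) (u a : Fin p → ℝ) (ha : ∑ i, a i ^ 2 = 1)
    (z : ℝ) (hz : 0 < z) :
    ∫ x, (∑ i, x i * a i) ^ 2 * Real.exp ((∑ i, (x i - u i) ^ 2) / 4)
        ∂(Measure.pi fun _ : Fin p => gaussianReal 0 1) ≤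
      (2 + (∑ i, u i * a i) ^ 2) * Real.exp ((p : ℝ) / 2 + (∑ i, u i ^ 2) / 2) := by
  classical
  set μ : Measure ℝ := gaussianReal 0 1 with hμ
  set e : Fin p → ℝ → ℝ := fun k t => Real.exp ((t - u k) ^ 2 / 4) with he
  set F : Fin p → Fin p → Fin p → ℝ → ℝ :=
    fun i j k t => (if k = i then t else 1) * ((if k = j then t else 1) * e k t) with hF
  set w : Fin p → Fin p → Fin p → ℝ :=
    fun i j k => (if k = i then -u k else 1) * (if k = j then -u k else 1)
      + (if k = i ∧ k = j then 2 else 0) with hw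
  -- integrability of each 1-D factor
  have hFint : ∀ i j k, Integrable (F i j k) μ := by
    intro i j k
    rcases eq_or_ne k i with hki | hki <;> rcases eq_or_ne k j with hkj | hkj
    · subst hki; subst hkj
      refine (gint_x2e (u k)).congr (Filter.Eventually.of_forall fun t => ?_)
      simp [hF, he]
      try ring
    · subst hki
      refine (gint_xe (u k)).congr (Filter.Eventually.of_forall fun t => ?_)
      simp [hF, he, hkj]
      try ring
    · subst hkj
      refine (gint_xe (u k)).congr (Filter.Eventually.of_forall fun t => ?_)
      simp [hF, he, hki]
      try ring
    · refine (gint_e (u k)).congr (Filter.Eventually.of_forall fun t => ?_)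
      simp [hF, he, hki, hkj]
      try ring
  -- value of each 1-D factor
  have hFval : ∀ i j k, (∫ t, F i j k t ∂μ) = (√2 * Real.exp (u k ^ 2 / 2)) * w i j k := by
    intro i j k
    rcases eq_or_ne k i with hki | hki <;> rcases eq_or_ne k j with hkj | hkj
    · subst hki; subst hkj
      have h1 : (∫ t, F k k k t ∂μ)
          = ∫ t, t ^ 2 * Real.exp ((t - u k) ^ 2 / 4) ∂(gaussianReal 0 1) := by
        refine integral_congr_ae (Filter.Eventually.of_forall fun t => ?_)
        simp [hF, he]
        try ring
      rw [h1, gval_x2e]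
      simp [hw]
      try ring
    · subst hki
      have h1 : (∫ t, F k j k t ∂μ)
          = ∫ t, t * Real.exp ((t - u k) ^ 2 / 4) ∂(gaussianReal 0 1) := by
        refine integral_congr_ae (Filter.Eventually.of_forall fun t => ?_)
        simp [hF, he, hkj]
        try ring
      rw [h1, gval_xe]
      have hcond : ¬(k = k ∧ k = j) := fun h => hkj h.2
      simp [hw, hkj, hcond]
      try ring
    · subst hkj
      have h1 : (∫ t, F i k k t ∂μ)
          = ∫ t, t * Real.exp ((t - u k) ^ 2 / 4) ∂(gaussianReal 0 1) := by
        refine integral_congr_ae (Filter.Eventually.of_forall fun t => ?_)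
        simp [hF, he, hki]
        try ring
      rw [h1, gval_xe]
      have hcond : ¬(k = i ∧ k = k) := fun h => hki h.1
      simp [hw, hki, hcond]
      try ring
    · have h1 : (∫ t, F i j k t ∂μ)
          = ∫ t, Real.exp ((t - u k) ^ 2 / 4) ∂(gaussianReal 0 1) := by
        refine integral_congr_ae (Filter.Eventually.of_forall fun t => ?_)
        simp [hF, he, hki, hkj]
        try ring
      rw [h1, gval_e]
      have hcond : ¬(k = i ∧ k = j) := fun h => hki h.1
      simp [hw, hki, hkj, hcond]
      try ring
  -- product of the w's
  have hWprod : ∀ i j, (∏ k, w i j k) = u i * u j + (if i = j then 2 else 0) := by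
    intro i j
    rcases eq_or_ne i j with hij | hij
    · subst hij
      have h1 : ∀ k, w i i k = (if k = i then u i * u i + 2 else 1) := by
        intro k
        rcases eq_or_ne k i with hk | hk
        · subst hk
          simp [hw]
          try ring
        · have hcond : ¬(k = i ∧ k = i) := fun h => hk h.1
          simp [hw, hk, hcond]
          try ring
      rw [Finset.prod_congr rfl fun k _ => h1 k]
      simp
    · have h1 : ∀ k, w i j k = (if k = i then -u k else 1) * (if k = j then -u k else 1) := by
        intro k
        have hcond : ¬(k = i ∧ k = j) := fun h => hij ((h.1.symm.trans h.2))
        simp [hw, hcond]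
        try ring
      rw [Finset.prod_congr rfl fun k _ => h1 k, Finset.prod_mul_distrib]
      simp [hij]
  -- pointwise identity for the integrand
  have hpt : ∀ x : Fin p → ℝ,
      (∑ i, x i * a i) ^ 2 * Real.exp ((∑ i, (x i - u i) ^ 2) / 4)
        = ∑ i, ∑ j, (a i * a j) * ∏ k, F i j k (x k) := by
    intro x
    have hexp : Real.exp ((∑ i, (x i - u i) ^ 2) / 4) = ∏ k, e k (x k) := by
      rw [Finset.sum_div, Real.exp_sum]
    have hprod : ∀ i j, (∏ k, F i j k (x k)) = x i * x j * ∏ k, e k (x k) := by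
      intro i j
      have h1 : (∏ k, (if k = i then x k else 1)) = x i := by simp
      have h2 : (∏ k, (if k = j then x k else 1)) = x j := by simp
      simp only [hF]
      rw [Finset.prod_mul_distrib, Finset.prod_mul_distrib, h1, h2, mul_assoc]
    calc (∑ i, x i * a i) ^ 2 * Real.exp ((∑ i, (x i - u i) ^ 2) / 4)
        = ∑ i, ∑ j, (a i * a j) * (x i * x j * ∏ k, e k (x k)) := by
          rw [hexp, sq, Finset.sum_mul_sum, Finset.sum_mul]
          refine Finset.sum_congr rfl fun i _ => ?_
          rw [Finset.sum_mul]
          refine Finset.sum_congr rfl fun j _ => ?_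
          try ring
      _ = ∑ i, ∑ j, (a i * a j) * ∏ k, F i j k (x k) := by
          refine Finset.sum_congr rfl fun i _ => Finset.sum_congr rfl fun j _ => ?_
          rw [hprod i j]
  -- integrability of the products
  have hPint : ∀ i j, Integrable (fun x : Fin p → ℝ => ∏ k, F i j k (x k))
      (Measure.pi fun _ => μ) := fun i j => my_integrable_pi μ (hFint i j)
  set C : ℝ := (√2) ^ p * Real.exp ((∑ i, u i ^ 2) / 2) with hC
  have hCprod : (∏ k : Fin p, (√2 * Real.exp (u k ^ 2 / 2))) = C := by
    rw [Finset.prod_mul_distrib, Finset.prod_const, ← Real.exp_sum, Finset.card_univ,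
      Fintype.card_fin, hC, ← Finset.sum_div]
  have hval : ∫ x, (∑ i, x i * a i) ^ 2 * Real.exp ((∑ i, (x i - u i) ^ 2) / 4)
        ∂(Measure.pi fun _ : Fin p => μ)
      = C * ((∑ i, a i * u i) ^ 2 + 2) := by
    calc ∫ x, (∑ i, x i * a i) ^ 2 * Real.exp ((∑ i, (x i - u i) ^ 2) / 4)
          ∂(Measure.pi fun _ : Fin p => μ)
        = ∫ x, ∑ i, ∑ j, (a i * a j) * ∏ k, F i j k (x k) ∂(Measure.pi fun _ : Fin p => μ) :=
          integral_congr_ae (Filter.Eventually.of_forall hpt)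
      _ = ∑ i, ∑ j, ∫ x, (a i * a j) * ∏ k, F i j k (x k) ∂(Measure.pi fun _ : Fin p => μ) := by
          rw [integral_finset_sum _ fun i _ =>
            integrable_finset_sum _ fun j _ => (hPint i j).const_mul _]
          refine Finset.sum_congr rfl fun i _ => ?_
          rw [integral_finset_sum _ fun j _ => (hPint i j).const_mul _]
      _ = ∑ i, ∑ j, (a i * a j) * (C * (u i * u j + if i = j then 2 else 0)) := by
          refine Finset.sum_congr rfl fun i _ => Finset.sum_congr rfl fun j _ => ?_
          rw [integral_const_mul, my_integral_pi μ (F i j),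
            Finset.prod_congr rfl fun k _ => hFval i j k, Finset.prod_mul_distrib,
            hCprod, hWprod i j]
      _ = C * ((∑ i, a i * u i) ^ 2 + 2) := by
          have hterm : ∀ i j, (a i * a j) * (C * (u i * u j + if i = j then 2 else 0))
              = C * ((a i * u i) * (a j * u j)) + (if i = j then C * (2 * (a i * a j)) else 0) := by
            intro i j
            rcases eq_or_ne i j with h | h
            · simp [h]
              try ring
            · simp [h, add_zero]
              try ring
          simp_rw [hterm, Finset.sum_add_distrib]
          have hA : ∑ i, ∑ j, C * ((a i * u i) * (a j * u j))
              = C * (∑ i, a i * u i) ^ 2 := by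
            rw [sq, Finset.sum_mul_sum]
            simp_rw [Finset.mul_sum]
          have hB : ∑ i : Fin p, ∑ j : Fin p, (if i = j then C * (2 * (a i * a j)) else 0)
              = C * 2 := by
            have : ∀ i : Fin p, ∑ j : Fin p, (if i = j then C * (2 * (a i * a j)) else 0)
                = C * (2 * (a i * a i)) := by
              intro i
              rw [Finset.sum_ite_eq]
              simp
            rw [Finset.sum_congr rfl fun i _ => this i]
            have : ∑ i, C * (2 * (a i * a i)) = C * 2 * ∑ i, a i ^ 2 := by
              rw [Finset.mul_sum]
              refine Finset.sum_congr rfl fun i _ => ?_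
              try ring
            rw [this, ha, mul_one]
          rw [hA, hB]
          try ring
  rw [hval]
  -- final inequality
  have hsq : (∑ i, a i * u i) = ∑ i, u i * a i :=
    Finset.sum_congr rfl fun i _ => mul_comm _ _
  rw [hsq, Real.exp_add, hC]
  have h1 : (√2 : ℝ) ^ p ≤ Real.exp ((p : ℝ) / 2) := by
    have h2e : (√2 : ℝ) ≤ Real.exp 2⁻¹ := by
      have he1 : (2 : ℝ) ≤ Real.exp 1 := by
        have := Real.add_one_le_exp 1
        linarith
      calc (√2 : ℝ) ≤ √(Real.exp 1) := Real.sqrt_le_sqrt he1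
        _ = Real.exp 2⁻¹ := by
            rw [show Real.exp 1 = Real.exp 2⁻¹ ^ 2 by
              rw [← Real.exp_nat_mul]; norm_num]
            exact Real.sqrt_sq (le_of_lt (Real.exp_pos _))
    calc (√2 : ℝ) ^ p ≤ (Real.exp 2⁻¹) ^ p :=
          pow_le_pow_left₀ (Real.sqrt_nonneg 2) h2e p
      _ = Real.exp ((p : ℝ) / 2) := by
          rw [← Real.exp_nat_mul]
          congr 1
          try ring
  calc (√2 : ℝ) ^ p * Real.exp ((∑ i, u i ^ 2) / 2) * ((∑ i, u i * a i) ^ 2 + 2)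
      = (((∑ i, u i * a i) ^ 2 + 2) * Real.exp ((∑ i, u i ^ 2) / 2)) * (√2 : ℝ) ^ p := by
        try ring
    _ ≤ (((∑ i, u i * a i) ^ 2 + 2) * Real.exp ((∑ i, u i ^ 2) / 2))
          * Real.exp ((p : ℝ) / 2) := by
        apply mul_le_mul_of_nonneg_left h1
        positivity
    _ = (2 + (∑ i, u i * a i) ^ 2) * (Real.exp ((p : ℝ) / 2)
          * Real.exp ((∑ i, u i ^ 2) / 2)) := by
        try ring
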